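/- Let u₁, u₂ be two C² solutions of -u'' = xu - u^{p+1} on [0,∞) with u_i(0) = 0, 0 ≤ u_i(x) ≤ x^{1/p} for all x ≥ 0, u_i > 0 on (0,∞), u_i' > 0 on [0,∞), and u₁ ≤ u₂. Then the quotient u₂/u₁ is non-decreasing on (0,∞); consequently u₂(x)/u₁(x) ≥ u₂'(0)/u₁'(0) for all x > 0. -/

import Mathlib

open Filter

/-- Monotonicity of the quotient of two ordered solutions of `-u'' = xu - u^{p+1}`
vanishing at the origin. -/
theorem stmt5 (p : ℝ) (hp : 1 < p) (u₁ u₂ : ℝ → ℝ)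
    (h1 : ContDiff ℝ 2 u₁) (h2 : ContDiff ℝ 2 u₂)
    (heq1 : ∀ x ≥ (0:ℝ), -(deriv (deriv u₁) x) = x * u₁ x - u₁ x ^ (p + 1))
    (heq2 : ∀ x ≥ (0:ℝ), -(deriv (deriv u₂) x) = x * u₂ x - u₂ x ^ (p + 1))
    (h10 : u₁ 0 = 0) (h20 : u₂ 0 = 0)
    (hb1 : ∀ x ≥ (0:ℝ), 0 ≤ u₁ x ∧ u₁ x ≤ x ^ (1 / p))
    (hb2 : ∀ x ≥ (0:ℝ), 0 ≤ u₂ x ∧ u₂ x ≤ x ^ (1 / p))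
    (hpos1 : ∀ x > (0:ℝ), 0 < u₁ x) (hpos2 : ∀ x > (0:ℝ), 0 < u₂ x)
    (hd1 : ∀ x ≥ (0:ℝ), 0 < deriv u₁ x) (hd2 : ∀ x ≥ (0:ℝ), 0 < deriv u₂ x)
    (hle : ∀ x ≥ (0:ℝ), u₁ x ≤ u₂ x) :
    MonotoneOn (fun x => u₂ x / u₁ x) (Set.Ioi 0) ∧
    ∀ x > (0:ℝ), deriv u₂ 0 / deriv u₁ 0 ≤ u₂ x / u₁ x := by
  -- basic differentiability facts
  have hdiff1 : Differentiable ℝ u₁ := h1.differentiable (by norm_num)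
  have hdiff2 : Differentiable ℝ u₂ := h2.differentiable (by norm_num)
  have h1' : ContDiff ℝ ((1:ℕ∞)+1) u₁ := by exact_mod_cast h1
  have h2' : ContDiff ℝ ((1:ℕ∞)+1) u₂ := by exact_mod_cast h2
  have hC1 : ContDiff ℝ 1 (deriv u₁) := (contDiff_succ_iff_deriv.mp h1').2.2
  have hC2 : ContDiff ℝ 1 (deriv u₂) := (contDiff_succ_iff_deriv.mp h2').2.2
  have hdd1 : Differentiable ℝ (deriv u₁) := hC1.differentiable (by norm_num)
  have hdd2 : Differentiable ℝ (deriv u₂) := hC2.differentiable (by norm_num)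
  set W : ℝ → ℝ := fun x => deriv u₂ x * u₁ x - u₂ x * deriv u₁ x with hW
  have hWd : ∀ x : ℝ, HasDerivAt W
      (deriv (deriv u₂) x * u₁ x - u₂ x * deriv (deriv u₁) x) x := by
    intro x
    have h₁ := ((hdd2 x).hasDerivAt.mul (hdiff1 x).hasDerivAt)
    have h₂ := ((hdiff2 x).hasDerivAt.mul (hdd1 x).hasDerivAt)
    have := h₁.sub h₂
    rw [show W = deriv u₂ * u₁ - u₂ * deriv u₁ from rfl]
    exact this.congr_deriv (by ring)
  have hWdiff : Differentiable ℝ W := fun x => (hWd x).differentiableAt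
  have hWderiv_nonneg : ∀ x ∈ Set.Ioi (0:ℝ), 0 ≤ deriv W x := by
    intro x hx
    rw [(hWd x).deriv]
    have hx0 : (0:ℝ) ≤ x := le_of_lt hx
    have e1 : deriv (deriv u₁) x = u₁ x ^ (p + 1) - x * u₁ x := by
      have := heq1 x hx0; linarith
    have e2 : deriv (deriv u₂) x = u₂ x ^ (p + 1) - x * u₂ x := by
      have := heq2 x hx0; linarith
    rw [e1, e2]
    have h1p : 0 < u₁ x := hpos1 x hx
    have h12 : u₁ x ≤ u₂ x := hle x hx0
    have h2p : 0 < u₂ x := lt_of_lt_of_le h1p h12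
    have hrp : u₁ x ^ p ≤ u₂ x ^ p := Real.rpow_le_rpow h1p.le h12 (by linarith)
    have r1 : u₁ x ^ (p + 1) = u₁ x ^ p * u₁ x := by
      rw [Real.rpow_add h1p, Real.rpow_one]
    have r2 : u₂ x ^ (p + 1) = u₂ x ^ p * u₂ x := by
      rw [Real.rpow_add h2p, Real.rpow_one]
    rw [r1, r2]
    nlinarith [mul_pos h1p h2p]
  have hWmono : MonotoneOn W (Set.Ici (0:ℝ)) := by
    apply monotoneOn_of_deriv_nonneg (convex_Ici 0) (hWdiff.continuous.continuousOn)
      (fun x _ => (hWdiff x).differentiableWithinAt)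
      (fun x hx => hWderiv_nonneg x (by simpa using hx))
  have hW0 : W 0 = 0 := by simp [hW, h10, h20]
  have hWnonneg : ∀ x ≥ (0:ℝ), 0 ≤ W x := by
    intro x hx
    have := hWmono (Set.self_mem_Ici) (Set.mem_Ici.mpr hx) hx
    rwa [hW0] at this
  -- quotient derivative
  have hQd : ∀ x ∈ Set.Ioi (0:ℝ), HasDerivAt (fun x => u₂ x / u₁ x)
      ((deriv u₂ x * u₁ x - u₂ x * deriv u₁ x) / (u₁ x) ^ 2) x := by
    intro x hx
    exact (hdiff2 x).hasDerivAt.div (hdiff1 x).hasDerivAt (hpos1 x hx).ne'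
  have hmono : MonotoneOn (fun x => u₂ x / u₁ x) (Set.Ioi 0) := by
    apply monotoneOn_of_deriv_nonneg (convex_Ioi 0)
    · exact ContinuousOn.div hdiff2.continuous.continuousOn hdiff1.continuous.continuousOn
        (fun x hx => (hpos1 x hx).ne')
    · intro x hx
      rw [interior_Ioi] at hx
      exact (hQd x hx).differentiableAt.differentiableWithinAt
    · intro x hx
      rw [interior_Ioi] at hx
      rw [(hQd x hx).deriv]
      exact div_nonneg (hWnonneg x (le_of_lt hx)) (sq_nonneg _)
  refine ⟨hmono, ?_⟩
  intro x hx
  -- limit of the quotient at 0⁺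
  have hslope1 : Tendsto (fun y => u₁ y / y) (nhdsWithin 0 (Set.Ioi 0)) (nhds (deriv u₁ 0)) := by
    have := (hdiff1 0).hasDerivAt
    rw [hasDerivAt_iff_tendsto_slope] at this
    have h' := this.mono_left (nhdsWithin_mono 0 (by intro y hy; simpa using (ne_of_gt hy) : Set.Ioi (0:ℝ) ⊆ {0}ᶜ))
    refine h'.congr' ?_
    filter_upwards [self_mem_nhdsWithin] with y hy
    simp [slope, h10, sub_zero, div_eq_inv_mul]
  have hslope2 : Tendsto (fun y => u₂ y / y) (nhdsWithin 0 (Set.Ioi 0)) (nhds (deriv u₂ 0)) := by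
    have := (hdiff2 0).hasDerivAt
    rw [hasDerivAt_iff_tendsto_slope] at this
    have h' := this.mono_left (nhdsWithin_mono 0 (by intro y hy; simpa using (ne_of_gt hy) : Set.Ioi (0:ℝ) ⊆ {0}ᶜ))
    refine h'.congr' ?_
    filter_upwards [self_mem_nhdsWithin] with y hy
    simp [slope, h20, sub_zero, div_eq_inv_mul]
  have hd10 : deriv u₁ 0 ≠ 0 := (hd1 0 le_rfl).ne'
  have hlim : Tendsto (fun y => u₂ y / u₁ y) (nhdsWithin 0 (Set.Ioi 0))
      (nhds (deriv u₂ 0 / deriv u₁ 0)) := by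
    have := hslope2.div hslope1 hd10
    refine this.congr' ?_
    filter_upwards [self_mem_nhdsWithin] with y hy
    have hy' : (y:ℝ) ≠ 0 := (ne_of_gt hy)
    simp only [Pi.div_apply]
    field_simp
  refine le_of_tendsto hlim ?_
  filter_upwards [Ioo_mem_nhdsGT_of_mem (Set.mem_Ico.mpr ⟨le_rfl, hx⟩)] with y hy
  exact hmono hy.1 hx hy.2.le
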